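/- Let K be a compact topological space and let F be a Mackey-complete Hausdorff locally convex space over ℝ. Then the space C(K, F) of continuous maps from K to F, equipped with the topology of uniform convergence (the compact-open topology), is Mackey-complete. -/

import Mathlib

open Filter Topology Set Bornology Pointwise

/-- A sequence in a locally convex space is *Mackey-Cauchy* if there are a bounded
absolutely convex set `B` and a double sequence of nonnegative reals `c` tending to `0`
such that `x n - x m ∈ c n m • B` for all `n, m`. -/
def MackeyCauchy (E : Type*) [AddCommGroup E] [Module ℝ E] [TopologicalSpace E]
    (x : ℕ → E) : Prop :=
  ∃ (B : Set E) (c : ℕ → ℕ → ℝ),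
    IsVonNBounded ℝ B ∧ Convex ℝ B ∧ Balanced ℝ B ∧
    (∀ n m, 0 ≤ c n m) ∧
    Tendsto (fun p : ℕ × ℕ => c p.1 p.2) atTop (𝓝 (0 : ℝ)) ∧
    ∀ n m, x n - x m ∈ c n m • B

/-- A locally convex space is *Mackey-complete* if every Mackey-Cauchy sequence converges. -/
def MackeyComplete (E : Type*) [AddCommGroup E] [Module ℝ E] [TopologicalSpace E] : Prop :=
  ∀ x : ℕ → E, MackeyCauchy E x → ∃ l : E, Tendsto x atTop (𝓝 l)

/-- A locally convex space is *k-quasi-complete* if the closed absolutely convex hull of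
every compact set is compact. -/
def KQuasiComplete (E : Type*) [AddCommGroup E] [Module ℝ E] [TopologicalSpace E] : Prop :=
  ∀ K : Set E, IsCompact K → IsCompact (closure (convexHull ℝ (balancedHull ℝ K)))

/-- For a compact topological space `K` and a Mackey-complete Hausdorff
locally convex space `F` over `ℝ`, the space `C(K, F)` of continuous maps with the topology of
uniform convergence (the compact-open topology) is Mackey-complete. -/
theorem mackeyComplete_continuousMap
    (K : Type*) [TopologicalSpace K] [CompactSpace K]
    (F : Type*) [AddCommGroup F] [Module ℝ F] [TopologicalSpace F] [IsTopologicalAddGroup F]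
    [ContinuousSMul ℝ F] [LocallyConvexSpace ℝ F] [T2Space F]
    (hF : MackeyComplete F) :
    MackeyComplete C(K, F) := by
  intro x hx
  obtain ⟨B, c, hBb, hBc, hBbal, hc0, hcto, hmem⟩ := hx
  -- evaluation as a continuous linear map
  let evalCLM : K → (C(K, F) →L[ℝ] F) := fun k =>
    { toFun := fun f => f k
      map_add' := fun f g => rfl
      map_smul' := fun a f => rfl
      cont := continuous_eval_const k }
  -- pointwise limits exist
  have hptwise : ∀ k : K, ∃ l, Tendsto (fun n => x n k) atTop (𝓝 l) := by
    intro k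
    apply hF
    refine ⟨(evalCLM k) '' B, c, hBb.image (evalCLM k),
      hBc.linear_image (evalCLM k).toLinearMap, ?_, hc0, hcto, ?_⟩
    · intro a ha
      rintro y ⟨z, ⟨b, hb, rfl⟩, rfl⟩
      exact ⟨a • b, hBbal a ha (smul_mem_smul_set hb), map_smul (evalCLM k) a b⟩
    · intro n m
      obtain ⟨b, hb, hbe⟩ := hmem n m
      refine ⟨(evalCLM k) b, mem_image_of_mem _ hb, ?_⟩
      have : (x n - x m) k = c n m • b k := by rw [← hbe]; simp
      simp only [ContinuousMap.sub_apply] at this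
      exact this.symm
  choose f hf using hptwise
  -- the key uniform estimate
  have main : ∀ V ∈ 𝓝 (0 : F), ∀ᶠ n in atTop, ∀ k, x n k - f k ∈ V := by
    intro V hV
    obtain ⟨W, ⟨hW, hWc, hWb⟩, hWV⟩ := (nhds_basis_closed_balanced ℝ F).mem_iff.1 hV
    -- the basic neighborhood of 0 in C(K, F)
    set Ω : Set C(K, F) := {g : C(K, F) | MapsTo g univ (interior W)} with hΩdef
    have hΩ : Ω ∈ 𝓝 (0 : C(K, F)) := by
      refine (ContinuousMap.isOpen_setOf_mapsTo isCompact_univ isOpen_interior).mem_nhds ?_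
      intro k _
      simpa using mem_interior_iff_mem_nhds.2 hW
    obtain ⟨r, hr⟩ := absorbs_iff_norm.1 (hBb hΩ)
    set t : ℝ := max r 1 with htdef
    have ht1 : (1 : ℝ) ≤ t := le_max_right r 1
    have ht0 : (0 : ℝ) < t := lt_of_lt_of_le one_pos ht1
    have hBt : B ⊆ t • Ω := hr t (by simpa [htdef] using (le_max_left r 1).trans (le_abs_self _))
    have hsm : ∀ᶠ p : ℕ × ℕ in atTop, |c p.1 p.2| ≤ t⁻¹ := by
      have := hcto (Metric.closedBall_mem_nhds (0 : ℝ) (by positivity : (0:ℝ) < t⁻¹))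
      filter_upwards [this] with p hp
      simpa [Real.dist_eq] using hp
    obtain ⟨N, hN⟩ := eventually_atTop.1 hsm
    set N₀ : ℕ := max N.1 N.2 with hN₀def
    have cauchy : ∀ n m, N₀ ≤ n → N₀ ≤ m → ∀ k, x n k - x m k ∈ W := by
      intro n m hn hm k
      obtain ⟨b, hb, hbe⟩ := hmem n m
      obtain ⟨g, hg, hgb⟩ := hBt hb
      have hck : |c n m| ≤ t⁻¹ := hN (n, m)
        ⟨le_trans (le_max_left N.1 N.2) hn, le_trans (le_max_right N.1 N.2) hm⟩
      have h1 : x n k - x m k = (c n m * t) • g k := by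
        have : (x n - x m) k = c n m • b k := by rw [← hbe]; simp
        rw [← hgb] at this
        simpa [ContinuousMap.sub_apply, ContinuousMap.smul_apply, mul_smul] using this
      rw [h1]
      have hle : ‖c n m * t‖ ≤ 1 := by
        rw [Real.norm_eq_abs, abs_mul, abs_of_pos ht0]
        calc |c n m| * t ≤ t⁻¹ * t := by nlinarith [abs_nonneg (c n m)]
          _ = 1 := inv_mul_cancel₀ (ne_of_gt ht0)
      exact hWb.smul_mem hle (interior_subset (hg (mem_univ k)))
    have : ∀ᶠ n in atTop, ∀ k, x n k - f k ∈ W := by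
      rw [eventually_atTop]
      refine ⟨N₀, fun n hn k => ?_⟩
      have htend : Tendsto (fun m => x n k - x m k) atTop (𝓝 (x n k - f k)) :=
        tendsto_const_nhds.sub (hf k)
      exact hWc.mem_of_tendsto htend
        (eventually_atTop.2 ⟨N₀, fun m hm => cauchy n m hn hm k⟩)
    filter_upwards [this] with n hn k using hWV (hn k)
  -- conclude via uniform convergence
  letI : UniformSpace F := IsTopologicalAddGroup.rightUniformSpace F
  haveI : IsUniformAddGroup F := isUniformAddGroup_of_addCommGroup
  have hU : TendstoUniformly (fun n k => x n k) f atTop := by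
    intro u hu
    rw [uniformity_eq_comap_nhds_zero F] at hu
    obtain ⟨V, hV, hVu⟩ := hu
    filter_upwards [main V hV] with n hn k
    exact hVu (hn k)
  have hcont : Continuous f := hU.continuous (Eventually.of_forall fun n => (x n).continuous).frequently
  refine ⟨⟨f, hcont⟩, ?_⟩
  rw [ContinuousMap.tendsto_iff_tendstoUniformly]
  exact hU
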